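/- arXiv:2310.14559 — 2 statements merged into one kernel-verified Lean document; each statement's English description precedes it below -/
import Mathlib

section
/- Fix integers r ≥ 1 and S ≥ 1, real times τ₁ < τ₂ < ⋯ < τ_{S+1}, nonnegative constants L₁, …, L_S, and for each s = 1, …, S a map f_s : ℝʳ → ℝʳ that is L_s-Lipschitz with respect to the supremum norm. Let ε ≥ 0. Suppose the 'true' states N*₁, …, N*_{S+1} ∈ ℝʳ and the 'clustered' states N₁, …, N_{S+1} ∈ ℝʳ satisfy: (i) N₁ = N*₁; (ii) for each s there is a differentiable M*_s : [τ_s, τ_{s+1}] → ℝʳ with M*_s(τ_s) = N*_s, (M*_s)'(t) = f_s(M*_s(t)) for all t ∈ [τ_s, τ_{s+1}], and N*_{s+1} = M*_s(τ_{s+1}); (iii) for each s there is a differentiable M_s : [τ_s, τ_{s+1}] → ℝʳ with M_s(τ_s) = N_s, (M_s)'(t) = f_s(M_s(t)) for all t ∈ [τ_s, τ_{s+1}], and ‖N_{s+1} − M_s(τ_{s+1})‖_∞ ≤ ε. Then for every s with 2 ≤ s ≤ S+1, ‖N*_s − N_s‖_∞ ≤ ε · Σ_{σ=3}^{s+1}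 exp(Σ_{ν=σ}^{s} L_{ν−1}(τ_ν − τ_{ν−1})), where an empty inner sum is taken to be 0, and ‖N*₁ − N₁‖_∞ = 0. -/
/-- **Proposition 4 of the paper: global approximation error of the clustered state space.**
`f s` is the (`L s`-Lipschitz in the sup norm) ODE transition function at epoch `s`, the
true states satisfy `N*_{s+1} = M*_s(τ_{s+1})` where `M*_s` solves the ODE from `N*_s`,
and the clustered states satisfy `‖N_{s+1} − M_s(τ_{s+1})‖_∞ ≤ ε` where `M_s` solves the
ODE from `N_s` (each centroid is within `ε` of the exact successor). Then
`‖N*_s − N_s‖_∞ ≤ ε ∑_{σ=3}^{s+1} exp (∑_{ν=σ}^{s} L_{ν−1}(τ_ν − τ_{ν−1}))` for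
`2 ≤ s ≤ S+1`, and the error at `s = 1` is `0`. The norm on `Fin r → ℝ` is the sup norm. -/
theorem clustered_state_space_error (r S : ℕ) (hr : 1 ≤ r) (hS : 1 ≤ S)
    (τ : ℕ → ℝ) (hτ : ∀ s, 1 ≤ s → s ≤ S → τ s < τ (s + 1))
    (L : ℕ → ℝ) (hL : ∀ s, 1 ≤ s → s ≤ S → 0 ≤ L s)
    (f : ℕ → (Fin r → ℝ) → (Fin r → ℝ))
    (hf : ∀ s, 1 ≤ s → s ≤ S → ∀ u v : Fin r → ℝ, ‖f s u - f s v‖ ≤ L s * ‖u - v‖)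
    (ε : ℝ) (hε : 0 ≤ ε)
    (Nstar N : ℕ → (Fin r → ℝ))
    (hinit : N 1 = Nstar 1)
    (htrue : ∀ s, 1 ≤ s → s ≤ S → ∃ M : ℝ → (Fin r → ℝ),
      M (τ s) = Nstar s ∧
      (∀ t ∈ Set.Icc (τ s) (τ (s + 1)), HasDerivAt M (f s (M t)) t) ∧
      Nstar (s + 1) = M (τ (s + 1)))
    (hclust : ∀ s, 1 ≤ s → s ≤ S → ∃ M : ℝ → (Fin r → ℝ),
      M (τ s) = N s ∧
      (∀ t ∈ Set.Icc (τ s) (τ (s + 1)), HasDerivAt M (f s (M t)) t) ∧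
      ‖N (s + 1) - M (τ (s + 1))‖ ≤ ε) :
    ‖Nstar 1 - N 1‖ = 0 ∧
    ∀ s, 2 ≤ s → s ≤ S + 1 →
      ‖Nstar s - N s‖ ≤
        ε * ∑ σ ∈ Finset.Icc 3 (s + 1),
          Real.exp (∑ ν ∈ Finset.Icc σ s, L (ν - 1) * (τ ν - τ (ν - 1))) := by
  have h1 : ‖Nstar 1 - N 1‖ = 0 := by rw [hinit, sub_self, norm_zero]
  -- one-step estimate
  have step : ∀ s, 1 ≤ s → s ≤ S →
      ‖Nstar (s + 1) - N (s + 1)‖ ≤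
        ‖Nstar s - N s‖ * Real.exp (L s * (τ (s + 1) - τ s)) + ε := by
    intro s hs1 hsS
    obtain ⟨Ms, hMs0, hMs', hMs1⟩ := htrue s hs1 hsS
    obtain ⟨M, hM0, hM', hM1⟩ := hclust s hs1 hsS
    have hab : τ s ≤ τ (s + 1) := (hτ s hs1 hsS).le
    have hK : LipschitzWith (L s).toNNReal (f s) := by
      apply LipschitzWith.of_dist_le_mul
      intro u v
      rw [dist_eq_norm, dist_eq_norm, Real.coe_toNNReal _ (hL s hs1 hsS)]
      exact hf s hs1 hsS u v
    have hcontS : ContinuousOn Ms (Set.Icc (τ s) (τ (s + 1))) := fun t ht =>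
      (hMs' t ht).continuousAt.continuousWithinAt
    have hcont : ContinuousOn M (Set.Icc (τ s) (τ (s + 1))) := fun t ht =>
      (hM' t ht).continuousAt.continuousWithinAt
    have key := dist_le_of_trajectories_ODE (v := fun _ x => f s x)
      (fun _ => hK) hcontS
      (fun t ht => (hMs' t (Set.Ico_subset_Icc_self ht)).hasDerivWithinAt)
      hcont
      (fun t ht => (hM' t (Set.Ico_subset_Icc_self ht)).hasDerivWithinAt)
      (le_refl (dist (Ms (τ s)) (M (τ s))))
      (τ (s + 1)) (Set.right_mem_Icc.2 hab)
    rw [hMs0, hM0, Real.coe_toNNReal _ (hL s hs1 hsS)] at key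
    calc ‖Nstar (s + 1) - N (s + 1)‖
        ≤ ‖Ms (τ (s + 1)) - M (τ (s + 1))‖ + ‖N (s + 1) - M (τ (s + 1))‖ := by
          rw [hMs1]
          have : Ms (τ (s+1)) - N (s+1) =
              (Ms (τ (s+1)) - M (τ (s+1))) - (N (s+1) - M (τ (s+1))) := by ring
          rw [this]
          exact norm_sub_le _ _
      _ ≤ ‖Nstar s - N s‖ * Real.exp (L s * (τ (s + 1) - τ s)) + ε := by
          apply add_le_add _ hM1
          rw [← dist_eq_norm, ← dist_eq_norm]
          exact key
  -- induction
  refine ⟨h1, ?_⟩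
  have main : ∀ s, 1 ≤ s → s ≤ S + 1 →
      ‖Nstar s - N s‖ ≤
        ε * ∑ σ ∈ Finset.Icc 3 (s + 1),
          Real.exp (∑ ν ∈ Finset.Icc σ s, L (ν - 1) * (τ ν - τ (ν - 1))) := by
    intro s hs1
    induction s, hs1 using Nat.le_induction with
    | base =>
      intro _
      simp [h1]
    | succ s hs1 ih =>
      intro hsS
      have hsS' : s ≤ S := by omega
      have hrec := step s hs1 hsS'
      have hih := ih (by omega)
      set g : ℕ → ℝ := fun ν => L (ν - 1) * (τ ν - τ (ν - 1)) with hg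
      have hsum : ∑ σ ∈ Finset.Icc 3 (s + 1 + 1), Real.exp (∑ ν ∈ Finset.Icc σ (s + 1), g ν)
          = (∑ σ ∈ Finset.Icc 3 (s + 1), Real.exp (∑ ν ∈ Finset.Icc σ s, g ν))
              * Real.exp (g (s + 1)) + 1 := by
        have hempty : Finset.Icc (s + 1 + 1) (s + 1) = (∅ : Finset ℕ) :=
          Finset.Icc_eq_empty (by omega)
        rw [Finset.sum_Icc_succ_top (by omega : 3 ≤ s + 1 + 1), hempty, Finset.sum_empty,
          Real.exp_zero]
        congr 1
        have hcongr : ∀ σ ∈ Finset.Icc 3 (s + 1),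
            Real.exp (∑ ν ∈ Finset.Icc σ (s + 1), g ν)
              = Real.exp (∑ ν ∈ Finset.Icc σ s, g ν) * Real.exp (g (s + 1)) := by
          intro σ hσ
          rw [Finset.sum_Icc_succ_top (Finset.mem_Icc.1 hσ).2, Real.exp_add]
        rw [Finset.sum_congr rfl hcongr, ← Finset.sum_mul]
      have hgs : g (s + 1) = L s * (τ (s + 1) - τ s) := by simp [hg]
      calc ‖Nstar (s + 1) - N (s + 1)‖
          ≤ ‖Nstar s - N s‖ * Real.exp (g (s + 1)) + ε := by rw [hgs]; exact hrec
        _ ≤ (ε * ∑ σ ∈ Finset.Icc 3 (s + 1), Real.exp (∑ ν ∈ Finset.Icc σ s, g ν))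
              * Real.exp (g (s + 1)) + ε := by
            exact add_le_add_left
              (mul_le_mul_of_nonneg_right hih (Real.exp_pos _).le) ε
        _ = ε * ((∑ σ ∈ Finset.Icc 3 (s + 1), Real.exp (∑ ν ∈ Finset.Icc σ s, g ν))
              * Real.exp (g (s + 1)) + 1) := by ring
        _ = ε * ∑ σ ∈ Finset.Icc 3 (s + 1 + 1), Real.exp (∑ ν ∈ Finset.Icc σ (s + 1), g ν) := by
            rw [hsum]
  intro s hs2 hsS
  exact main s (by omega) hsS
end

section
/- Let ε ≥ 0 and let p₁, …, p_n ∈ ℝʳ with n ≥ 1. For k = 1, …, n define m_k, M_k ∈ ℝʳ by (m_k)_j = min_{1 ≤ i ≤ k} (p_i)_j and (M_k)_j = max_{1 ≤ i ≤ k} (p_i)_j (componentwise running minimum and maximum). Suppose that for every k = 1, …, n−1, max(‖p_{k+1} − m_k‖_∞, ‖p_{k+1} − M_k‖_∞) ≤ ε. Then ‖M_n − m_n‖_∞ ≤ ε, and consequently ‖p_i − p_j‖_∞ ≤ ε for all 1 ≤ i, j ≤ n. -/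
/-- **Proposition 3 of the paper: bounded ℓ∞-diameter of each cluster.**
States `p 1, …, p n` are assigned sequentially to a cluster; letting `m_k` and `M_k`
denote the componentwise running minimum and maximum of `p 1, …, p k`, the state
`p (k+1)` is accepted only if `max (‖p(k+1) − m_k‖_∞, ‖p(k+1) − M_k‖_∞) ≤ ε`.
Then the final elementwise min and max are at ℓ∞-distance at most `ε`, and hence any
two states in the cluster are at ℓ∞-distance at most `ε`.
The norm on `Fin r → ℝ` is the sup norm. -/
theorem cluster_diameter_bound {r : ℕ} (ε : ℝ) (hε : 0 ≤ ε) (n : ℕ) (hn : 1 ≤ n)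
    (p : ℕ → (Fin r → ℝ))
    (haccept : ∀ k, ∀ hk : 1 ≤ k, k ≤ n - 1 →
      max ‖p (k + 1) - (fun j => (Finset.Icc 1 k).inf' (Finset.nonempty_Icc.mpr hk)
            (fun i => p i j))‖
          ‖p (k + 1) - (fun j => (Finset.Icc 1 k).sup' (Finset.nonempty_Icc.mpr hk)
            (fun i => p i j))‖ ≤ ε) :
    ‖(fun j => (Finset.Icc 1 n).sup' (Finset.nonempty_Icc.mpr hn) (fun i => p i j)) -
      (fun j => (Finset.Icc 1 n).inf' (Finset.nonempty_Icc.mpr hn) (fun i => p i j))‖ ≤ ε ∧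
    ∀ i j, 1 ≤ i → i ≤ n → 1 ≤ j → j ≤ n → ‖p i - p j‖ ≤ ε := by
  -- componentwise key claim
  have key : ∀ k, 1 ≤ k → k ≤ n → ∀ hk : (Finset.Icc 1 k).Nonempty, ∀ j : Fin r,
      (Finset.Icc 1 k).sup' hk (fun i => p i j) -
        (Finset.Icc 1 k).inf' hk (fun i => p i j) ≤ ε := by
    intro k hk1
    induction k, hk1 using Nat.le_induction with
    | base =>
      intro _ hk j
      simp [hε]
    | succ k hk1 ih =>
      intro hkn hne j
      have hkn' : k ≤ n := le_trans (Nat.le_succ k) hkn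
      have hkn1 : k ≤ n - 1 := Nat.le_sub_one_of_lt (lt_of_lt_of_le (Nat.lt_succ_self k) hkn)
      have hacc := haccept k hk1 hkn1
      have hne' : (Finset.Icc 1 k).Nonempty := Finset.nonempty_Icc.mpr hk1
      set m := fun j : Fin r => (Finset.Icc 1 k).inf' hne' (fun i => p i j) with hm
      set M := fun j : Fin r => (Finset.Icc 1 k).sup' hne' (fun i => p i j) with hM
      have h1 : |p (k+1) j - m j| ≤ ε := by
        have := le_trans (norm_le_pi_norm (p (k+1) - m) j)
          (le_trans (le_max_left _ _) hacc)
        simpa using this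
      have h2 : |p (k+1) j - M j| ≤ ε := by
        have := le_trans (norm_le_pi_norm (p (k+1) - M) j)
          (le_trans (le_max_right _ _) hacc)
        simpa using this
      have hIcc : Finset.Icc 1 (k+1) = insert (k+1) (Finset.Icc 1 k) := by
        ext x
        simp [Finset.mem_Icc, Finset.mem_insert]
        omega
      have hsup : (Finset.Icc 1 (k+1)).sup' hne (fun i => p i j)
          = max (p (k+1) j) (M j) := by
        simp_rw [hIcc]
        rw [Finset.sup'_insert]
      have hinf : (Finset.Icc 1 (k+1)).inf' hne (fun i => p i j)
          = min (p (k+1) j) (m j) := by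
        simp_rw [hIcc]
        rw [Finset.inf'_insert]
      rw [hsup, hinf]
      have hmM := ih hkn' hne' j
      rw [abs_le] at h1 h2
      rcases max_cases (p (k+1) j) (M j) with ⟨e1, _⟩ | ⟨e1, _⟩ <;>
        rcases min_cases (p (k+1) j) (m j) with ⟨e2, _⟩ | ⟨e2, _⟩ <;>
        rw [e1, e2] <;> linarith [h1.1, h1.2, h2.1, h2.2]
  -- bounds: m ≤ p i ≤ M on Icc 1 n
  have hne : (Finset.Icc 1 n).Nonempty := Finset.nonempty_Icc.mpr hn
  have hmem : ∀ i, 1 ≤ i → i ≤ n → i ∈ Finset.Icc 1 n := fun i h1 h2 =>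
    Finset.mem_Icc.mpr ⟨h1, h2⟩
  have hlow : ∀ i, 1 ≤ i → i ≤ n → ∀ j : Fin r,
      (Finset.Icc 1 n).inf' hne (fun i => p i j) ≤ p i j := fun i h1 h2 j =>
    Finset.inf'_le _ (hmem i h1 h2)
  have hhigh : ∀ i, 1 ≤ i → i ≤ n → ∀ j : Fin r,
      p i j ≤ (Finset.Icc 1 n).sup' hne (fun i => p i j) := fun i h1 h2 j =>
    Finset.le_sup' (fun i => p i j) (hmem i h1 h2)
  constructor
  · rw [pi_norm_le_iff_of_nonneg hε]
    intro j
    have h := key n hn le_rfl hne j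
    have h0 : (Finset.Icc 1 n).inf' hne (fun i => p i j)
        ≤ (Finset.Icc 1 n).sup' hne (fun i => p i j) :=
      le_trans (hlow 1 le_rfl hn j) (hhigh 1 le_rfl hn j)
    rw [Real.norm_eq_abs]
    simp only [Pi.sub_apply]
    rw [abs_of_nonneg (by linarith)]
    exact h
  · intro i j hi1 hin hj1 hjn
    rw [pi_norm_le_iff_of_nonneg hε]
    intro t
    have h := key n hn le_rfl hne t
    rw [Real.norm_eq_abs]
    simp only [Pi.sub_apply]
    rw [abs_le]
    constructor <;>
      [linarith [hlow i hi1 hin t, hhigh j hj1 hjn t];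
       linarith [hhigh i hi1 hin t, hlow j hj1 hjn t]]
end
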